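/- Let n ≥ 1 and 0 ≤ δ < 1. There exists N₀ (depending only on n and δ) such that for every integer N' ≥ N₀ the kernel K(ξ₁,ξ₂) = (1+|ξ₁|)^{−nδ/2}(1+|ξ₂|)^{−nδ/2}·(1 + |ξ₁−ξ₂|^{N'}/(1+|ξ₁|+|ξ₂|)^{δN'})^{−1/2} on ℝⁿ×ℝⁿ satisfies sup_{ξ₁∈ℝⁿ} ∫_{ℝⁿ} K(ξ₁,ξ₂) dξ₂ < ∞ (and by symmetry sup_{ξ₂∈ℝⁿ} ∫_{ℝⁿ} K(ξ₁,ξ₂) dξ₁ < ∞), so that by Schur's lemma K is the kernel of a bounded operator on L²(ℝⁿ). -/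

import Mathlib

open MeasureTheory Real Complex SchwartzMap
open scoped ENNReal NNReal BigOperators

noncomputable section

/-- Euclidean `n`-space. -/
abbrev Rn (n : ℕ) : Type := EuclideanSpace ℝ (Fin n)

namespace OIOPaper

/-- Standard basis vector of `ℝⁿ`. -/
def e (n : ℕ) (i : Fin n) : Rn n := EuclideanSpace.single i (1 : ℝ)

/-- Directional derivative along the vector `v`. -/
def dAlong {E F : Type*} [NormedAddCommGroup E] [NormedSpace ℝ E]
    [NormedAddCommGroup F] [NormedSpace ℝ F] (v : E) (f : E → F) : E → F :=
  fun x => fderiv ℝ f x v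

/-- Iterated directional derivative along a list of vectors (head is the outermost
derivative). -/
def dList {E F : Type*} [NormedAddCommGroup E] [NormedSpace ℝ E]
    [NormedAddCommGroup F] [NormedSpace ℝ F] (L : List E) (f : E → F) : E → F :=
  L.foldr dAlong f

/-- Directions in the product space `ℝⁿ × ℝⁿ` corresponding to a multi-index (as a list of
coordinates) of `ξ`-derivatives. -/
def dxi (n : ℕ) (α : List (Fin n)) : List (Rn n × Rn n) :=
  α.map fun i => ((0 : Rn n), e n i)

/-- Directions in the product space `ℝⁿ × ℝⁿ` corresponding to a multi-index (as a list of
coordinates) of `x`-derivatives. -/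
def dx (n : ℕ) (β : List (Fin n)) : List (Rn n × Rn n) :=
  β.map fun i => (e n i, (0 : Rn n))

/-- The Japanese bracket `⟨ξ⟩^s = (1+|ξ|²)^{s/2}`. -/
def jap {n : ℕ} (ξ : Rn n) (s : ℝ) : ℝ := (1 + ‖ξ‖ ^ 2) ^ (s / 2)

/-- The Hörmander class `S^m_{ρ,δ}(ℝⁿ)`:  `a` is smooth and
`|∂_ξ^α ∂_x^β a(x,ξ)| ≤ C_{α,β} ⟨ξ⟩^{m - ρ|α| + δ|β|}`. -/
def HormClass (n : ℕ) (m ρ δ : ℝ) (a : Rn n × Rn n → ℂ) : Prop :=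
  ContDiff ℝ (⊤ : ℕ∞) a ∧
  ∀ α β : List (Fin n), ∃ C > 0, ∀ x ξ : Rn n,
    ‖dList (dxi n α ++ dx n β) a (x, ξ)‖ ≤
      C * jap ξ (m - ρ * α.length + δ * β.length)

/-- The class `L^∞S^m_ρ(ℝⁿ)`: measurable in `x`, smooth in `ξ`, with
`‖∂_ξ^α a(·,ξ)‖_{L^∞_x} ≤ C_α ⟨ξ⟩^{m-ρ|α|}`. -/
def LinftySm (n : ℕ) (m ρ : ℝ) (a : Rn n × Rn n → ℂ) : Prop :=
  Measurable a ∧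
  (∀ x : Rn n, ContDiff ℝ (⊤ : ℕ∞) fun ξ => a (x, ξ)) ∧
  ∀ α : List (Fin n), ∃ C > 0, ∀ x ξ : Rn n,
    ‖dList (α.map (e n)) (fun ξ' => a (x, ξ')) ξ‖ ≤ C * jap ξ (m - ρ * α.length)

/-- `φ(x,ξ) - x·ξ`. -/
def phaseDiff (n : ℕ) (φ : Rn n × Rn n → ℝ) : Rn n × Rn n → ℝ :=
  fun p => φ p - (inner ℝ p.1 p.2 : ℝ)

/-- The phase class `𝔉^k`. -/
def FClass (n : ℕ) (k : ℝ) (φ : Rn n × Rn n → ℝ) : Prop :=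
  ContDiffOn ℝ (⊤ : ℕ∞) φ {p : Rn n × Rn n | p.2 ≠ 0} ∧
  (1 ≤ k → ∀ α : List (Fin n), 1 ≤ α.length →
    ∃ C > 0, ∀ x ξ : Rn n, 1 ≤ ‖ξ‖ →
      |dList (dxi n α) (phaseDiff n φ) (x, ξ)| ≤ C * ‖ξ‖ ^ (k - 1)) ∧
  (k < 1 → ∀ α β : List (Fin n), 1 ≤ α.length + β.length →
    ∃ C > 0, ∀ x ξ : Rn n, 1 ≤ ‖ξ‖ →
      |dList (dxi n α ++ dx n β) (phaseDiff n φ) (x, ξ)| ≤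
        C * ‖ξ‖ ^ (k - (α.length : ℝ)))

/-- The mixed Hessian matrix `(∂²φ/∂x_i∂ξ_j)(x,ξ)`. -/
def mixedHessian (n : ℕ) (φ : Rn n × Rn n → ℝ) (x ξ : Rn n) : Matrix (Fin n) (Fin n) ℝ :=
  Matrix.of fun i j => dList [(e n i, (0 : Rn n)), ((0 : Rn n), e n j)] φ (x, ξ)

/-- Strong non-degeneracy away from `ξ = 0`. -/
def SND (n : ℕ) (φ : Rn n × Rn n → ℝ) : Prop :=
  ∃ δ₀ > 0, ∀ x ξ : Rn n, ξ ≠ 0 → δ₀ ≤ |(mixedHessian n φ x ξ).det|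

/-- Strong non-degeneracy at every point of `ℝⁿ × ℝⁿ`. -/
def SNDAll (n : ℕ) (φ : Rn n × Rn n → ℝ) : Prop :=
  ∃ δ₀ > 0, ∀ x ξ : Rn n, δ₀ ≤ |(mixedHessian n φ x ξ).det|

/-- The strong `L²`-condition: `|∂_x^α ∂_ξ^β φ(x,ξ)| ≤ C_{α,β}` for `|α| ≥ 1`, `|β| ≥ 1`,
`|ξ| ≥ 1`. -/
def StrongL2 (n : ℕ) (φ : Rn n × Rn n → ℝ) : Prop :=
  ∀ α β : List (Fin n), 1 ≤ α.length → 1 ≤ β.length →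
    ∃ C > 0, ∀ x ξ : Rn n, 1 ≤ ‖ξ‖ →
      |dList (dx n α ++ dxi n β) φ (x, ξ)| ≤ C

/-- The weak `L²`-condition, on a set `S`. -/
def WeakL2On (n : ℕ) (φ : Rn n × Rn n → ℝ) (S : Set (Rn n × Rn n)) : Prop :=
  (∀ α : List (Fin n), 1 ≤ α.length → ∃ C > 0,
    ∀ x ξ : Rn n, (x, ξ) ∈ S → 1 ≤ ‖ξ‖ → ∀ i : Fin n,
      |dList (dx n α ++ dxi n [i]) φ (x, ξ)| ≤ C) ∧
  (∀ β : List (Fin n), 1 ≤ β.length → ∃ C > 0,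
    ∀ x ξ : Rn n, (x, ξ) ∈ S → 1 ≤ ‖ξ‖ → ∀ i : Fin n,
      |dList (dx n [i] ++ dxi n β) φ (x, ξ)| ≤ C)

/-- The low-frequency condition LF(μ). -/
def LFcond (n : ℕ) (μ : ℝ) (φ : Rn n × Rn n → ℝ) : Prop :=
  ∀ α β : List (Fin n), ∃ C > 0, ∀ x ξ : Rn n, 0 < ‖ξ‖ → ‖ξ‖ ≤ 2 →
    |dList (dxi n α ++ dx n β) (phaseDiff n φ) (x, ξ)| ≤
      C * ‖ξ‖ ^ (μ - (α.length : ℝ))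

/-- The `ξ`-gradient `∇_ξ φ(x,ξ)`. -/
def gradXi (n : ℕ) (φ : Rn n × Rn n → ℝ) (x ξ : Rn n) : Rn n :=
  (EuclideanSpace.equiv (Fin n) ℝ).symm fun i => dAlong ((0 : Rn n), e n i) φ (x, ξ)

/-- The `x`-gradient `∇_x φ(x,ξ)`. -/
def gradX (n : ℕ) (φ : Rn n × Rn n → ℝ) (x ξ : Rn n) : Rn n :=
  (EuclideanSpace.equiv (Fin n) ℝ).symm fun i => dAlong (e n i, (0 : Rn n)) φ (x, ξ)

/-- The Fourier transform `f̂(ξ) = ∫ e^{-ix·ξ} f(x) dx`. -/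
def fourierT {n : ℕ} (f : Rn n → ℂ) (ξ : Rn n) : ℂ :=
  ∫ x : Rn n, Complex.exp (-(Complex.I) * ((inner ℝ x ξ : ℝ) : ℂ)) * f x

/-- The inverse Fourier transform `(2π)^{-n} ∫ e^{ix·ξ} g(ξ) dξ`. -/
def invFourier {n : ℕ} (g : Rn n → ℂ) (x : Rn n) : ℂ :=
  (1 / (2 * Real.pi) ^ n : ℝ) •
    ∫ ξ : Rn n, Complex.exp (Complex.I * ((inner ℝ x ξ : ℝ) : ℂ)) * g ξ

/-- The oscillatory integral operator
`T_a^φ f(x) = (2π)^{-n} ∫ e^{iφ(x,ξ)} a(x,ξ) f̂(ξ) dξ`. -/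
def oio (n : ℕ) (a : Rn n × Rn n → ℂ) (φ : Rn n × Rn n → ℝ) (f : Rn n → ℂ)
    (x : Rn n) : ℂ :=
  (1 / (2 * Real.pi) ^ n : ℝ) •
    ∫ ξ : Rn n, Complex.exp (Complex.I * ((φ (x, ξ) : ℝ) : ℂ)) * a (x, ξ) * fourierT f ξ

/-- The frequency-localized oscillatory integral operator
`T_a^φ ψ(D) f(x) = (2π)^{-n} ∫ e^{iφ(x,ξ)} a(x,ξ) ψ(ξ) f̂(ξ) dξ`. -/
def oioLP (n : ℕ) (a : Rn n × Rn n → ℂ) (φ : Rn n × Rn n → ℝ) (ψ : Rn n → ℝ)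
    (f : Rn n → ℂ) (x : Rn n) : ℂ :=
  (1 / (2 * Real.pi) ^ n : ℝ) •
    ∫ ξ : Rn n, Complex.exp (Complex.I * ((φ (x, ξ) : ℝ) : ℂ)) * a (x, ξ) *
      ((ψ ξ : ℝ) : ℂ) * fourierT f ξ

/-- A generating function for a Littlewood–Paley partition of unity. -/
structure IsLPBase (n : ℕ) (ψ₀ : Rn n → ℝ) : Prop where
  smooth : ContDiff ℝ (⊤ : ℕ∞) ψ₀
  supp_zero : ∀ ξ : Rn n, 2 ≤ ‖ξ‖ → ψ₀ ξ = 0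
  eq_one : ∀ ξ : Rn n, ‖ξ‖ ≤ 1 → ψ₀ ξ = 1

/-- The Littlewood–Paley family `ψ_j(ξ) = ψ₀(2^{-j}ξ) - ψ₀(2^{-(j-1)}ξ)` (j ≥ 1). -/
def LPfam {n : ℕ} (ψ₀ : Rn n → ℝ) : ℕ → Rn n → ℝ
  | 0 => ψ₀
  | (j+1) => fun ξ => ψ₀ ((2:ℝ) ^ (-(j:ℤ) - 1) • ξ) - ψ₀ ((2:ℝ) ^ (-(j:ℤ)) • ξ)

/-- The fattened Littlewood–Paley pieces `Ψ_j = ψ_{j-1} + ψ_j + ψ_{j+1}` (with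
`ψ_{-1} := ψ₀`). -/
def LPfamBig {n : ℕ} (ψ₀ : Rn n → ℝ) (j : ℕ) : Rn n → ℝ :=
  fun ξ => LPfam ψ₀ (j - 1) ξ + LPfam ψ₀ j ξ + LPfam ψ₀ (j + 1) ξ

/-- The operator `ψ(D) f := (𝓕^{-1} ψ) * f`. -/
def LPop {n : ℕ} (ψ : Rn n → ℝ) (f : Rn n → ℂ) (x : Rn n) : ℂ :=
  ∫ y : Rn n, invFourier (fun ξ => ((ψ ξ : ℝ) : ℂ)) (x - y) * f y

/-- The Besov–Lipschitz quasi-norm `‖f‖_{B^s_{p,q}}`, valued in `ℝ≥0∞`. -/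
def besovNorm {n : ℕ} (ψ₀ : Rn n → ℝ) (s : ℝ) (p q : ℝ≥0∞) (f : Rn n → ℂ) : ℝ≥0∞ :=
  if q = ⊤ then
    ⨆ j : ℕ, ENNReal.ofReal ((2:ℝ) ^ ((j : ℝ) * s)) *
      eLpNorm (LPop (LPfam ψ₀ j) f) p volume
  else
    (∑' j : ℕ, (ENNReal.ofReal ((2:ℝ) ^ ((j : ℝ) * s)) *
        eLpNorm (LPop (LPfam ψ₀ j) f) p volume) ^ q.toReal) ^ (1 / q.toReal)

/-- The inner `ℓ^q`-expression of the Triebel–Lizorkin quasi-norm. -/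
def tlInner {n : ℕ} (ψ₀ : Rn n → ℝ) (s : ℝ) (q : ℝ≥0∞) (f : Rn n → ℂ)
    (x : Rn n) : ℝ≥0∞ :=
  if q = ⊤ then
    ⨆ j : ℕ, ENNReal.ofReal ((2:ℝ) ^ ((j : ℝ) * s)) * (‖LPop (LPfam ψ₀ j) f x‖₊ : ℝ≥0∞)
  else
    (∑' j : ℕ, (ENNReal.ofReal ((2:ℝ) ^ ((j : ℝ) * s)) *
        (‖LPop (LPfam ψ₀ j) f x‖₊ : ℝ≥0∞)) ^ q.toReal) ^ (1 / q.toReal)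

/-- The Triebel–Lizorkin quasi-norm `‖f‖_{F^s_{p,q}}` (for `p < ∞`), valued in `ℝ≥0∞`. -/
def tlNorm {n : ℕ} (ψ₀ : Rn n → ℝ) (s : ℝ) (p q : ℝ≥0∞) (f : Rn n → ℂ) : ℝ≥0∞ :=
  (∫⁻ x : Rn n, tlInner ψ₀ s q f x ^ p.toReal) ^ (1 / p.toReal)

/-- The closed axis-parallel cube with corner `c` and side length `l`. -/
def cube (n : ℕ) (c : Rn n) (l : ℝ) : Set (Rn n) :=
  {x | ∀ i, c i ≤ x i ∧ x i ≤ c i + l}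

/-- `k_Q = [1 - log₂ l_Q]`. -/
def kOf (l : ℝ) : ℤ := ⌊1 - Real.logb 2 l⌋

/-- The cube concentric with `cube n c l` with side length `t*l`. -/
def dilCube (n : ℕ) (c : Rn n) (l t : ℝ) : Set (Rn n) :=
  {x | ∀ i, |x i - (c i + l / 2)| ≤ t * l / 2}

/-- An `h^p`-atom supported in the cube with corner `c` and side length `l`. -/
def IsHpAtom (n : ℕ) (p : ℝ) (c : Rn n) (l : ℝ) (𝔞 : Rn n → ℂ) : Prop :=
  0 < l ∧ Measurable 𝔞 ∧
  (∀ x, x ∉ cube n c l → 𝔞 x = 0) ∧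
  (∀ x, ‖𝔞 x‖ ≤ (2:ℝ) ^ ((kOf l : ℝ) * n / p)) ∧
  (1 ≤ kOf l → ∀ α : Fin n → ℕ, ((∑ i, α i : ℕ) : ℤ) ≤ ⌊(n : ℝ) * (1 / p - 1)⌋ →
    ∫ x : Rn n, (∏ i, ((x i : ℝ) : ℂ) ^ α i) * 𝔞 x = 0)

/-- The frequency-localized kernel
`K_j(x,y) = (2π)^{-n} ∫ e^{i(φ(x,ξ) - y·ξ)} ψ_j(ξ) a(x,ξ) dξ` as a function of the
pair `p = (x,y)`. -/
def Kj (n : ℕ) (ψ₀ : Rn n → ℝ) (a : Rn n × Rn n → ℂ) (φ : Rn n × Rn n → ℝ) (j : ℕ)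
    (p : Rn n × Rn n) : ℂ :=
  (1 / (2 * Real.pi) ^ n : ℝ) •
    ∫ ξ : Rn n, Complex.exp (Complex.I * ((φ (p.1, ξ) - (inner ℝ p.2 ξ : ℝ) : ℝ) : ℂ)) *
      ((LPfam ψ₀ j ξ : ℝ) : ℂ) * a (p.1, ξ)

/-- The dyadic cube `2^{-(j-1)}(m + [0,1]ⁿ)`. -/
def dyadicCube (n : ℕ) (j : ℤ) (m : Fin n → ℤ) : Set (Rn n) :=
  {x | ∀ i, (m i : ℝ) * (2:ℝ) ^ (1 - j) ≤ x i ∧ x i ≤ ((m i : ℝ) + 1) * (2:ℝ) ^ (1 - j)}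

/-- The center of the dyadic cube `2^{-(j-1)}(m + [0,1]ⁿ)`. -/
def dyadicCenter (n : ℕ) (j : ℤ) (m : Fin n → ℤ) : Rn n :=
  (EuclideanSpace.equiv (Fin n) ℝ).symm fun i => ((m i : ℝ) + 1 / 2) * (2:ℝ) ^ (1 - j)

/-- `Ψ̌^{Q̃}(x) = 2^{-n k_{Q̃}/2} (𝓕^{-1}Ψ_{k_{Q̃}})(x - c_{Q̃})` for the dyadic cube
`Q̃` of level `j ≥ 0` indexed by `m`. -/
def psiCheckQ {n : ℕ} (ψ₀ : Rn n → ℝ) (j : ℕ) (m : Fin n → ℤ) (x : Rn n) : ℂ :=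
  ((2:ℝ) ^ (-(n : ℝ) * (j : ℝ) / 2) : ℝ) •
    invFourier (fun ξ => ((LPfamBig ψ₀ j ξ : ℝ) : ℂ)) (x - dyadicCenter n (j : ℤ) m)

/-- The sequence quasi-norm `‖b‖_{f^0_{∞,q}}` over the dyadic cubes in `𝒟_+`. -/
def fSeqNorm (n : ℕ) (q : ℝ≥0∞) (b : ℕ → (Fin n → ℤ) → ℂ) : ℝ≥0∞ :=
  ⨆ x : Rn n,
    if q = ⊤ then
      ⨆ jm : ℕ × (Fin n → ℤ),
        ENNReal.ofReal ((2:ℝ) ^ ((jm.1 : ℝ) * n / 2)) * (‖b jm.1 jm.2‖₊ : ℝ≥0∞) *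
          (dyadicCube n (jm.1 : ℤ) jm.2).indicator (fun _ => (1 : ℝ≥0∞)) x
    else
      (∑' jm : ℕ × (Fin n → ℤ),
        (ENNReal.ofReal ((2:ℝ) ^ ((jm.1 : ℝ) * n / 2)) * (‖b jm.1 jm.2‖₊ : ℝ≥0∞) *
          (dyadicCube n (jm.1 : ℤ) jm.2).indicator (fun _ => (1 : ℝ≥0∞)) x) ^ q.toReal) ^
        (1 / q.toReal)

/-- `R_{Q,j}(x) = Σ_{Q̃ ∈ 𝒟_j(Q)} b_{Q̃} Ψ̌^{Q̃}(x)` for the dyadic cube `Q` of level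
`kQ` indexed by `mQ`. -/
def RQj {n : ℕ} (ψ₀ : Rn n → ℝ) (kQ : ℤ) (mQ : Fin n → ℤ) (b : ℕ → (Fin n → ℤ) → ℂ)
    (j : ℕ) (x : Rn n) : ℂ :=
  ∑' mt : Fin n → ℤ,
    Set.indicator {mt' : Fin n → ℤ | dyadicCube n (j : ℤ) mt' ⊆ dyadicCube n kQ mQ}
      (fun mt' => b j mt' * psiCheckQ ψ₀ j mt' x) mt

/-- The cube concentric with the dyadic cube `(kQ, mQ)` with side length scaled by `t`. -/
def scaledDyadic (n : ℕ) (kQ : ℤ) (mQ : Fin n → ℤ) (t : ℝ) : Set (Rn n) :=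
  {x | ∀ i, |x i - dyadicCenter n kQ mQ i| ≤ t * (2:ℝ) ^ (1 - kQ) / 2}

/-- `ϰ = min(ρ, 1-k)`. -/
def kappaOf (ρ k : ℝ) : ℝ := min ρ (1 - k)

/-- `ζ = min(0, n(ρ-δ)/2)`. -/
def zetaOf (n : ℕ) (ρ δ : ℝ) : ℝ := min 0 ((n : ℝ) * (ρ - δ) / 2)

/-- `m_ϰ(p) = -n(1-ϰ)(1/p - 1/2)`. -/
def mkappa (n : ℕ) (ρ k p : ℝ) : ℝ := -(n : ℝ) * (1 - kappaOf ρ k) * (1 / p - 1 / 2)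

/-- `m(p) = -n(1-ϰ)(1/p - 1/2) + ζ`. -/
def mOf (n : ℕ) (ρ δ k p : ℝ) : ℝ := mkappa n ρ k p + zetaOf n ρ δ

/-- `m(p) = -n(1-ϰ)|1/p - 1/2| + ζ`. -/
def mOfAbs (n : ℕ) (ρ δ k p : ℝ) : ℝ :=
  -(n : ℝ) * (1 - kappaOf ρ k) * |1 / p - 1 / 2| + zetaOf n ρ δ

/-- `w(k,ρ)` from the kernel estimates. -/
def wOf (k ρ : ℝ) : ℝ := if k < 1 then min ρ (1 - k) else k - 1


/-- The kernel appearing in the Schur-test step. -/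
def schurKernel (n : ℕ) (δ : ℝ) (N' : ℕ) (ξ₁ ξ₂ : Rn n) : ℝ :=
  (1 + ‖ξ₁‖) ^ (-(n : ℝ) * δ / 2) * (1 + ‖ξ₂‖) ^ (-(n : ℝ) * δ / 2) *
    (1 + ‖ξ₁ - ξ₂‖ ^ N' / (1 + ‖ξ₁‖ + ‖ξ₂‖) ^ (δ * (N' : ℝ))) ^ (-(1 : ℝ) / 2)

lemma max_pow_le (N : ℕ) {v : ℝ} (hv : 0 ≤ v) : (1+v)^N ≤ 2^N * (1+v^N) := by
  have h1 : (1+v) ≤ 2 * max 1 v := by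
    rcases le_total v 1 with h | h
    · rw [max_eq_left h]; linarith
    · rw [max_eq_right h]; linarith
  calc (1+v)^N ≤ (2*max 1 v)^N := pow_le_pow_left₀ (by linarith) h1 N
    _ = 2^N * (max 1 v)^N := mul_pow 2 _ N
    _ ≤ 2^N * (1+v^N) := by
        gcongr
        rcases le_total v 1 with h | h
        · rw [max_eq_left h, one_pow]
          nlinarith [pow_nonneg hv N]
        · rw [max_eq_right h]
          nlinarith [pow_nonneg hv N]

lemma rpow_neg_half_le {t c : ℝ} (hc : 0 < c) (h : c ≤ 1 + t) :
    (1+t) ^ (-(1:ℝ)/2) ≤ c ^ (-(1:ℝ)/2) :=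
  Real.rpow_le_rpow_of_nonpos hc h (by norm_num)

set_option maxHeartbeats 2000000 in
lemma schur_core (n N : ℕ) (δ : ℝ) (hδ0 : 0 ≤ δ) (hδ1 : δ < 1)
    (hN1 : 2*(n:ℝ)+2 ≤ (N:ℝ)) (hN2 : 2*((n:ℝ)+1) ≤ (1-δ)*(N:ℝ))
    (A1 A2 r : ℝ) (hA1 : 1 ≤ A1) (hA2 : 1 ≤ A2) (hr0 : 0 ≤ r)
    (h12r : A1 ≤ A2 + r) (h21r : A2 ≤ A1 + r) :
    A1 ^ (-(n:ℝ) * δ / 2) * A2 ^ (-(n:ℝ) * δ / 2) *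
        (1 + r ^ N / (A1 + A2 - 1) ^ (δ * (N : ℝ))) ^ (-(1:ℝ)/2) ≤
      (3:ℝ) ^ ((n:ℝ)*δ/2) * (2:ℝ) ^ (2*(N:ℝ)) *
        (A1 ^ (-((n:ℝ)*δ)) * (1 + r/A1^δ) ^ (-((n:ℝ)+1)) + A2 ^ (-((n:ℝ)+1))) := by
  set a : ℝ := (n:ℝ)*δ/2 with ha
  have ha0 : 0 ≤ a := by positivity
  have hA1p : (0:ℝ) < A1 := by linarith
  have hA2p : (0:ℝ) < A2 := by linarith
  set s : ℝ := A1 + A2 - 1 with hsdef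
  have hs1 : (1:ℝ) ≤ s := by rw [hsdef]; linarith
  have hsp : (0:ℝ) < s := by linarith
  have hC3 : (1:ℝ) ≤ (3:ℝ) ^ a := by
    calc (1:ℝ) = 1 ^ a := (one_rpow a).symm
    _ ≤ 3 ^ a := Real.rpow_le_rpow (by norm_num) (by norm_num) ha0
  have hsN : (0:ℝ) < s ^ (δ * (N:ℝ)) := Real.rpow_pos_of_pos hsp _
  set t : ℝ := r ^ N / s ^ (δ * (N:ℝ)) with htdef
  have ht0 : (0:ℝ) ≤ t := by positivity
  have hexp : -(n:ℝ) * δ / 2 = -a := by rw [ha]; ring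
  clear_value a s t
  rw [hexp]
  rcases le_or_gt r (s/2) with hcase | hcase
  · -- Case A
    have h21 : A2 ≤ 3 * A1 := by rw [hsdef] at hcase; linarith
    have h12 : A1 ≤ 3 * A2 := by rw [hsdef] at hcase; linarith
    have hs4 : s ≤ 4 * A1 := by rw [hsdef]; linarith
    have hpre : A2 ^ (-a) ≤ 3 ^ a * A1 ^ (-a) := by
      have h3 : A1/3 ≤ A2 := by linarith
      calc A2 ^ (-a) ≤ (A1/3) ^ (-a) :=
            Real.rpow_le_rpow_of_nonpos (by linarith) h3 (by linarith)
        _ = A1 ^ (-a) / 3 ^ (-a) := Real.div_rpow (by linarith) (by norm_num) _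
        _ = 3 ^ a * A1 ^ (-a) := by
            rw [Real.rpow_neg (by norm_num : (0:ℝ) ≤ 3), div_eq_mul_inv, inv_inv]; ring
    have hP : A1 ^ (-a) * A2 ^ (-a) ≤ 3 ^ a * A1 ^ (-((n:ℝ)*δ)) := by
      have hmul : A1 ^ (-a) * A1 ^ (-a) = A1 ^ (-((n:ℝ)*δ)) := by
        rw [← Real.rpow_add hA1p]; congr 1; rw [ha]; ring
      calc A1 ^ (-a) * A2 ^ (-a)
          ≤ A1 ^ (-a) * (3 ^ a * A1 ^ (-a)) :=
            mul_le_mul_of_nonneg_left hpre (Real.rpow_nonneg (by linarith) _)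
        _ = 3 ^ a * (A1 ^ (-a) * A1 ^ (-a)) := by ring
        _ = 3 ^ a * A1 ^ (-((n:ℝ)*δ)) := by rw [hmul]
    set L : ℝ := A1 ^ δ with hLdef
    have hL1 : (1:ℝ) ≤ L := by
      calc (1:ℝ) = 1 ^ δ := (one_rpow δ).symm
      _ ≤ L := Real.rpow_le_rpow (by norm_num) hA1 hδ0
    have hLp : (0:ℝ) < L := by linarith
    set u : ℝ := r / L with hudef
    have hu0 : 0 ≤ u := by positivity
    clear_value L u
    have hsd : s ^ δ ≤ 4 * L := by
      calc s ^ δ ≤ (4 * A1) ^ δ := Real.rpow_le_rpow (by linarith) hs4 hδ0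
        _ = 4 ^ δ * L := by rw [hLdef]; exact Real.mul_rpow (by norm_num) (by linarith)
        _ ≤ 4 * L := by
            have h4 : (4:ℝ) ^ δ ≤ 4 ^ (1:ℝ) :=
              Real.rpow_le_rpow_of_exponent_le (by norm_num) (by linarith)
            rw [Real.rpow_one] at h4
            nlinarith
    have hsdN : s ^ (δ * (N:ℝ)) ≤ (4*L) ^ N := by
      rw [Real.rpow_mul (le_of_lt hsp), Real.rpow_natCast]
      exact pow_le_pow_left₀ (Real.rpow_nonneg (le_of_lt hsp) _) hsd N
    have huN : u ^ N ≤ 4 ^ N * t := by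
      have h4N : (0:ℝ) < 4 ^ N := by positivity
      have h2 : r ^ N / (4^N * L^N) ≤ t := by
        rw [htdef]
        gcongr
        calc s ^ (δ*(N:ℝ)) ≤ (4*L)^N := hsdN
          _ = 4^N * L^N := mul_pow 4 L N
      have h3 : u ^ N = 4^N * (r ^ N / (4^N * L^N)) := by
        rw [hudef, div_pow]
        field_simp
      rw [h3]
      have := mul_le_mul_of_nonneg_left (a := (4:ℝ)^N) (b := r ^ N / (4^N * L^N)) (c := t) h2 (le_of_lt h4N)
      linarith
    have hlow : ((1+u)/8) ^ N ≤ 1 + t := by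
      have h8 : ((1:ℝ)+u)^N ≤ 8^N * (1+t) := by
        calc (1+u)^N ≤ 2^N * (1+u^N) := max_pow_le N hu0
          _ ≤ 2^N * (1 + 4^N * t) := by gcongr
          _ ≤ 2^N * (4^N * (1+t)) := by
              have h41 : (1:ℝ) ≤ 4^N := one_le_pow₀ (by norm_num : (1:ℝ) ≤ 4)
              have hkey : (1:ℝ) + 4^N*t ≤ 4^N*(1+t) := by
                rw [mul_add, mul_one]
                have := mul_le_mul_of_nonneg_right h41 ht0
                linarith
              exact mul_le_mul_of_nonneg_left hkey (by positivity)
          _ = 8^N * (1+t) := by rw [show (8:ℝ) = 2*4 by norm_num, mul_pow]; ring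
      have h8p : (0:ℝ) < 8^N := by positivity
      rw [div_pow, div_le_iff₀ h8p]
      linarith
    have hT : (1+t) ^ (-(1:ℝ)/2) ≤ 2 ^ (2*(N:ℝ)) * (1+u) ^ (-((n:ℝ)+1)) := by
      have hcpos : (0:ℝ) < ((1+u)/8) ^ N := by positivity
      have step1 := rpow_neg_half_le hcpos hlow
      have heq : (((1+u)/8) ^ N : ℝ) ^ (-(1:ℝ)/2)
          = (1+u) ^ (-(N:ℝ)/2) * 8 ^ ((N:ℝ)/2) := by
        rw [← Real.rpow_natCast ((1+u)/8) N, ← Real.rpow_mul (by positivity),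
          Real.div_rpow (by linarith) (by norm_num),
          show (N:ℝ) * (-(1:ℝ)/2) = -((N:ℝ)/2) by ring,
          Real.rpow_neg (by norm_num : (0:ℝ) ≤ 8), div_eq_mul_inv, inv_inv, neg_div]
      have h1u : (1+u) ^ (-(N:ℝ)/2) ≤ (1+u) ^ (-((n:ℝ)+1)) :=
        Real.rpow_le_rpow_of_exponent_le (by linarith) (by linarith)
      have h8b : (8:ℝ) ^ ((N:ℝ)/2) ≤ 2 ^ (2*(N:ℝ)) := by
        have h16 : (8:ℝ) ≤ 2 ^ (4:ℝ) := by
          rw [show (4:ℝ) = ((4:ℕ):ℝ) by norm_num, Real.rpow_natCast]; norm_num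
        calc (8:ℝ) ^ ((N:ℝ)/2) ≤ ((2:ℝ) ^ (4:ℝ)) ^ ((N:ℝ)/2) :=
              Real.rpow_le_rpow (by norm_num) h16 (by positivity)
          _ = 2 ^ (2*(N:ℝ)) := by
              rw [← Real.rpow_mul (by norm_num : (0:ℝ) ≤ 2)]
              congr 1
              ring
      calc (1+t) ^ (-(1:ℝ)/2) ≤ (((1+u)/8) ^ N : ℝ) ^ (-(1:ℝ)/2) := step1
        _ = (1+u) ^ (-(N:ℝ)/2) * 8 ^ ((N:ℝ)/2) := heq
        _ ≤ (1+u) ^ (-((n:ℝ)+1)) * 2 ^ (2*(N:ℝ)) :=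
            mul_le_mul h1u h8b (by positivity) (Real.rpow_nonneg (by linarith) _)
        _ = 2 ^ (2*(N:ℝ)) * (1+u) ^ (-((n:ℝ)+1)) := by ring
    have hfin : A1 ^ (-a) * A2 ^ (-a) * (1+t) ^ (-(1:ℝ)/2) ≤
        (3:ℝ) ^ a * 2 ^ (2*(N:ℝ)) * (A1 ^ (-((n:ℝ)*δ)) * (1 + u) ^ (-((n:ℝ)+1))) := by
      calc A1 ^ (-a) * A2 ^ (-a) * (1+t) ^ (-(1:ℝ)/2)
          ≤ (3 ^ a * A1 ^ (-((n:ℝ)*δ))) * (2 ^ (2*(N:ℝ)) * (1+u) ^ (-((n:ℝ)+1))) := by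
            apply mul_le_mul hP hT (Real.rpow_nonneg (by linarith) _)
            positivity
        _ = _ := by ring
    refine hfin.trans ?_
    rw [mul_add]
    have hY : (0:ℝ) ≤ (3:ℝ) ^ a * 2 ^ (2*(N:ℝ)) * (A2 ^ (-((n:ℝ)+1))) := by positivity
    linarith
  · -- Case B
    have hP1 : A1 ^ (-a) ≤ 1 := Real.rpow_le_one_of_one_le_of_nonpos hA1 (by linarith)
    have hP2 : A2 ^ (-a) ≤ 1 := Real.rpow_le_one_of_one_le_of_nonpos hA2 (by linarith)
    have hlow : (A2 ^ (2*((n:ℝ)+1))) / 2^N ≤ 1 + t := by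
      have h1 : s ^ ((1-δ)*(N:ℝ)) / 2^N ≤ t := by
        have hrs : (s/2) ^ N ≤ r ^ N := pow_le_pow_left₀ (by linarith) (le_of_lt hcase) N
        have h2 : (s/2)^N / s ^ (δ*(N:ℝ)) ≤ t := by
          rw [htdef]; gcongr
        have h3 : (s/2)^N / s ^ (δ*(N:ℝ)) = s ^ ((1-δ)*(N:ℝ)) / 2^N := by
          rw [div_pow, show s^N = s ^ ((N:ℝ)) from (Real.rpow_natCast s N).symm,
            div_div, mul_comm ((2:ℝ)^N), ← div_div, ← Real.rpow_sub hsp]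
          congr 2
          ring
        rw [← h3]; exact h2
      have h4 : A2 ^ (2*((n:ℝ)+1)) ≤ s ^ ((1-δ)*(N:ℝ)) := by
        calc A2 ^ (2*((n:ℝ)+1)) ≤ s ^ (2*((n:ℝ)+1)) :=
              Real.rpow_le_rpow (by linarith) (by rw [hsdef]; linarith) (by positivity)
          _ ≤ s ^ ((1-δ)*(N:ℝ)) := Real.rpow_le_rpow_of_exponent_le hs1 hN2
      have h2Np : (0:ℝ) < 2^N := by positivity
      calc A2 ^ (2*((n:ℝ)+1)) / 2^N ≤ s ^ ((1-δ)*(N:ℝ)) / 2^N := by gcongr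
        _ ≤ t := h1
        _ ≤ 1 + t := by linarith
    have hT : (1+t) ^ (-(1:ℝ)/2) ≤ 2 ^ (2*(N:ℝ)) * A2 ^ (-((n:ℝ)+1)) := by
      have hcpos : (0:ℝ) < (A2 ^ (2*((n:ℝ)+1))) / 2^N := by positivity
      have step1 := rpow_neg_half_le hcpos hlow
      have heq : ((A2 ^ (2*((n:ℝ)+1))) / 2^N : ℝ) ^ (-(1:ℝ)/2)
          = A2 ^ (-((n:ℝ)+1)) * 2 ^ ((N:ℝ)/2) := by
        rw [Real.div_rpow (Real.rpow_nonneg (by linarith) _) (by positivity),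
          ← Real.rpow_mul (by linarith),
          show (2:ℝ)^N = 2 ^ ((N:ℝ)) from (Real.rpow_natCast 2 N).symm,
          ← Real.rpow_mul (by norm_num),
          show 2*((n:ℝ)+1) * (-(1:ℝ)/2) = -((n:ℝ)+1) by ring,
          show ((N:ℝ)) * (-(1:ℝ)/2) = -((N:ℝ)/2) by ring,
          Real.rpow_neg (by norm_num : (0:ℝ) ≤ 2), div_eq_mul_inv, inv_inv]
      have h2b : (2:ℝ) ^ ((N:ℝ)/2) ≤ 2 ^ (2*(N:ℝ)) :=
        Real.rpow_le_rpow_of_exponent_le (by norm_num)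
          (by nlinarith [Nat.cast_nonneg (α := ℝ) N])
      calc (1+t) ^ (-(1:ℝ)/2) ≤ ((A2 ^ (2*((n:ℝ)+1))) / 2^N : ℝ) ^ (-(1:ℝ)/2) := step1
        _ = A2 ^ (-((n:ℝ)+1)) * 2 ^ ((N:ℝ)/2) := heq
        _ ≤ A2 ^ (-((n:ℝ)+1)) * 2 ^ (2*(N:ℝ)) := by
            exact mul_le_mul_of_nonneg_left h2b (Real.rpow_nonneg (by linarith) _)
        _ = 2 ^ (2*(N:ℝ)) * A2 ^ (-((n:ℝ)+1)) := by ring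
    have hfin : A1 ^ (-a) * A2 ^ (-a) * (1+t) ^ (-(1:ℝ)/2) ≤
        2 ^ (2*(N:ℝ)) * A2 ^ (-((n:ℝ)+1)) := by
      have hTp : (0:ℝ) ≤ (1+t) ^ (-(1:ℝ)/2) := Real.rpow_nonneg (by linarith) _
      calc A1 ^ (-a) * A2 ^ (-a) * (1+t) ^ (-(1:ℝ)/2)
          ≤ 1 * 1 * (1+t) ^ (-(1:ℝ)/2) := by
            apply mul_le_mul (mul_le_mul hP1 hP2 (Real.rpow_nonneg (by linarith) _)
              (by norm_num)) le_rfl hTp (by norm_num)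
        _ = (1+t) ^ (-(1:ℝ)/2) := by ring
        _ ≤ _ := hT
    refine hfin.trans ?_
    rw [mul_add]
    have hX : (0:ℝ) ≤ (3:ℝ) ^ a * 2 ^ (2*(N:ℝ)) *
        (A1 ^ (-((n:ℝ)*δ)) * (1 + r/A1^δ) ^ (-((n:ℝ)+1))) := by positivity
    have hstep : 2 ^ (2*(N:ℝ)) * A2 ^ (-((n:ℝ)+1)) ≤
        (3:ℝ) ^ a * 2 ^ (2*(N:ℝ)) * (A2 ^ (-((n:ℝ)+1))) := by
      have hY : (0:ℝ) ≤ A2 ^ (-((n:ℝ)+1)) := Real.rpow_nonneg (by linarith) _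
      have h2p : (0:ℝ) ≤ (2:ℝ) ^ (2*(N:ℝ)) := by positivity
      calc 2 ^ (2*(N:ℝ)) * A2 ^ (-((n:ℝ)+1)) = 1 * (2 ^ (2*(N:ℝ)) * A2 ^ (-((n:ℝ)+1))) := by
            ring
        _ ≤ 3 ^ a * (2 ^ (2*(N:ℝ)) * A2 ^ (-((n:ℝ)+1))) :=
            mul_le_mul_of_nonneg_right hC3 (mul_nonneg h2p hY)
        _ = 3 ^ a * 2 ^ (2*(N:ℝ)) * (A2 ^ (-((n:ℝ)+1))) := by ring
    linarith

lemma schur_key (n N : ℕ) (δ : ℝ) (hδ0 : 0 ≤ δ) (hδ1 : δ < 1)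
    (hN1 : 2*(n:ℝ)+2 ≤ (N:ℝ)) (hN2 : 2*((n:ℝ)+1) ≤ (1-δ)*(N:ℝ)) (ξ₁ ξ₂ : Rn n) :
    schurKernel n δ N ξ₁ ξ₂ ≤
      (3:ℝ) ^ ((n:ℝ)*δ/2) * (2:ℝ) ^ (2*(N:ℝ)) *
        ((1+‖ξ₁‖) ^ (-((n:ℝ)*δ)) * (1 + ‖ξ₂-ξ₁‖/(1+‖ξ₁‖)^δ) ^ (-((n:ℝ)+1))
          + (1+‖ξ₂‖) ^ (-((n:ℝ)+1))) := by
  rw [norm_sub_rev ξ₂ ξ₁]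
  have h := schur_core n N δ hδ0 hδ1 hN1 hN2 (1+‖ξ₁‖) (1+‖ξ₂‖) ‖ξ₁-ξ₂‖
    (by linarith [norm_nonneg ξ₁]) (by linarith [norm_nonneg ξ₂]) (norm_nonneg _)
    (by linarith [norm_sub_norm_le ξ₁ ξ₂])
    (by rw [norm_sub_rev]; linarith [norm_sub_norm_le ξ₂ ξ₁])
  have hs : 1 + ‖ξ₁‖ + (1+‖ξ₂‖) - 1 = 1 + ‖ξ₁‖ + ‖ξ₂‖ := by ring
  rw [hs] at h
  exact h


lemma schurKernel_symm (n : ℕ) (δ : ℝ) (N : ℕ) (ξ₁ ξ₂ : Rn n) :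
    schurKernel n δ N ξ₁ ξ₂ = schurKernel n δ N ξ₂ ξ₁ := by
  unfold schurKernel
  rw [norm_sub_rev, show 1+‖ξ₁‖+‖ξ₂‖ = 1+‖ξ₂‖+‖ξ₁‖ from by ring]
  ring

lemma schur_integral_bound (n : ℕ) (δ : ℝ) (hδ0 : 0 ≤ δ) (hδ1 : δ < 1)
    (N : ℕ) (hN1 : 2*(n:ℝ)+2 ≤ (N:ℝ)) (hN2 : 2*((n:ℝ)+1) ≤ (1-δ)*(N:ℝ)) (ξ₁ : Rn n) :
    (∫ ξ₂ : Rn n, schurKernel n δ N ξ₁ ξ₂) ≤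
      (3:ℝ) ^ ((n:ℝ)*δ/2) * (2:ℝ) ^ (2*(N:ℝ)) *
        (2 * ∫ u : Rn n, (1+‖u‖) ^ (-((n:ℝ)+1))) := by
  set g : Rn n → ℝ := fun u => (1+‖u‖) ^ (-((n:ℝ)+1)) with hgdef
  have hg : Integrable g := by
    have := integrable_one_add_norm (E := Rn n) (μ := volume) (r := (n:ℝ)+1) (by simp)
    simpa [hgdef] using this
  have hA1 : (1:ℝ) ≤ 1 + ‖ξ₁‖ := by linarith [norm_nonneg ξ₁]
  have hA1p : (0:ℝ) < 1 + ‖ξ₁‖ := by linarith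
  set L : ℝ := (1 + ‖ξ₁‖) ^ δ with hLdef
  have hLp : (0:ℝ) < L := Real.rpow_pos_of_pos hA1p δ
  have hfeq : ∀ v : Rn n, g (L⁻¹ • v) = (1+‖v‖/L) ^ (-((n:ℝ)+1)) := by
    intro v
    rw [hgdef]
    simp only [norm_smul, Real.norm_eq_abs, abs_of_pos (inv_pos.mpr hLp)]
    rw [inv_mul_eq_div]
  set c1 : ℝ := (1 + ‖ξ₁‖) ^ (-((n:ℝ)*δ)) with hc1def
  have hc1p : (0:ℝ) < c1 := Real.rpow_pos_of_pos hA1p _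
  set C : ℝ := (3:ℝ) ^ ((n:ℝ)*δ/2) * (2:ℝ) ^ (2*(N:ℝ)) with hCdef
  have hCp : (0:ℝ) < C := by rw [hCdef]; positivity
  -- integrability of the translate/dilate
  have hint1 : Integrable (fun v : Rn n => g (L⁻¹ • v)) :=
    hg.comp_smul (inv_ne_zero hLp.ne')
  have hint2 : Integrable (fun ξ₂ : Rn n => g (L⁻¹ • (ξ₂ - ξ₁))) :=
    hint1.comp_sub_right ξ₁
  have hint3 : Integrable (fun ξ₂ : Rn n => (1+‖ξ₂-ξ₁‖/L) ^ (-((n:ℝ)+1))) := by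
    have : (fun ξ₂ : Rn n => (1+‖ξ₂-ξ₁‖/L) ^ (-((n:ℝ)+1)))
        = fun ξ₂ : Rn n => g (L⁻¹ • (ξ₂ - ξ₁)) := by
      funext ξ₂; rw [hfeq]
    rw [this]; exact hint2
  -- value of the dilated integral
  have hval : ∫ ξ₂ : Rn n, (1+‖ξ₂-ξ₁‖/L) ^ (-((n:ℝ)+1)) = L ^ n * ∫ u : Rn n, g u := by
    have e1 : ∫ ξ₂ : Rn n, (1+‖ξ₂-ξ₁‖/L) ^ (-((n:ℝ)+1))
        = ∫ ξ₂ : Rn n, g (L⁻¹ • (ξ₂ - ξ₁)) := by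
      congr 1; funext ξ₂; rw [hfeq]
    have e2 : ∫ ξ₂ : Rn n, g (L⁻¹ • (ξ₂ - ξ₁)) = ∫ v : Rn n, g (L⁻¹ • v) :=
      integral_sub_right_eq_self (fun v => g (L⁻¹ • v)) ξ₁
    have e3 : ∫ v : Rn n, g (L⁻¹ • v)
        = |((L⁻¹) ^ Module.finrank ℝ (Rn n))⁻¹| • ∫ u : Rn n, g u :=
      MeasureTheory.Measure.integral_comp_smul volume g L⁻¹
    have e4 : |((L⁻¹) ^ Module.finrank ℝ (Rn n))⁻¹| = L ^ n := by
      rw [finrank_euclideanSpace_fin, inv_pow, inv_inv, abs_of_pos (pow_pos hLp n)]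
    rw [e1, e2, e3, e4, smul_eq_mul]
  -- cancellation
  have hc1L : c1 * L ^ n = 1 := by
    have hLn : L ^ n = (1 + ‖ξ₁‖) ^ (δ * (n:ℝ)) := by
      rw [hLdef, ← Real.rpow_natCast ((1 + ‖ξ₁‖) ^ δ) n, ← Real.rpow_mul (le_of_lt hA1p)]
    rw [hc1def, hLn, ← Real.rpow_add hA1p]
    rw [show -((n:ℝ)*δ) + δ*(n:ℝ) = 0 from by ring, Real.rpow_zero]
  -- domination
  have hdom : ∀ ξ₂ : Rn n, schurKernel n δ N ξ₁ ξ₂ ≤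
      C * (c1 * (1+‖ξ₂-ξ₁‖/L) ^ (-((n:ℝ)+1)) + g ξ₂) := by
    intro ξ₂
    have := schur_key n N δ hδ0 hδ1 hN1 hN2 ξ₁ ξ₂
    simpa [hCdef, hc1def, hLdef, hgdef] using this
  have hK0 : ∀ ξ₂ : Rn n, 0 ≤ schurKernel n δ N ξ₁ ξ₂ := by
    intro ξ₂
    unfold schurKernel
    have h1 : (0:ℝ) < 1 + ‖ξ₂‖ := by linarith [norm_nonneg ξ₂]
    have h2 : (0:ℝ) < 1 + ‖ξ₁‖ + ‖ξ₂‖ := by linarith [norm_nonneg ξ₂]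
    have h3 : (0:ℝ) ≤ ‖ξ₁ - ξ₂‖ ^ N / (1 + ‖ξ₁‖ + ‖ξ₂‖) ^ (δ * (N:ℝ)) := by positivity
    have h4 : (0:ℝ) < 1 + ‖ξ₁ - ξ₂‖ ^ N / (1 + ‖ξ₁‖ + ‖ξ₂‖) ^ (δ * (N:ℝ)) := by linarith
    positivity
  have hintdom : Integrable
      (fun ξ₂ : Rn n => C * (c1 * (1+‖ξ₂-ξ₁‖/L) ^ (-((n:ℝ)+1)) + g ξ₂)) :=
    ((hint3.const_mul c1).add hg).const_mul C
  calc (∫ ξ₂ : Rn n, schurKernel n δ N ξ₁ ξ₂)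
      ≤ ∫ ξ₂ : Rn n, C * (c1 * (1+‖ξ₂-ξ₁‖/L) ^ (-((n:ℝ)+1)) + g ξ₂) := by
        apply integral_mono_of_nonneg (Filter.Eventually.of_forall hK0) hintdom
          (Filter.Eventually.of_forall hdom)
    _ = C * (c1 * (L ^ n * ∫ u : Rn n, g u) + ∫ u : Rn n, g u) := by
        rw [integral_const_mul, integral_add (hint3.const_mul c1) hg,
          integral_const_mul, hval]
    _ = C * (2 * ∫ u : Rn n, g u) := by
        rw [← mul_assoc, hc1L]
        ring

/-- The Schur-test integrability of the kernel
`K(ξ₁,ξ₂) = (1+|ξ₁|)^{-nδ/2}(1+|ξ₂|)^{-nδ/2}(1+|ξ₁-ξ₂|^{N'}/(1+|ξ₁|+|ξ₂|)^{δN'})^{-1/2}`. -/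
theorem statement1 (n : ℕ) (hn : 1 ≤ n) (δ : ℝ) (hδ0 : 0 ≤ δ) (hδ1 : δ < 1) :
    ∃ N₀ : ℕ, ∀ N' : ℕ, N₀ ≤ N' → ∃ B : ℝ,
      (∀ ξ₁ : Rn n, (∫ ξ₂ : Rn n, schurKernel n δ N' ξ₁ ξ₂) ≤ B) ∧
      (∀ ξ₂ : Rn n, (∫ ξ₁ : Rn n, schurKernel n δ N' ξ₁ ξ₂) ≤ B) := by
  refine ⟨max (2*n+2) ⌈(2*((n:ℝ)+1))/(1-δ)⌉₊, ?_⟩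
  intro N' hN'
  have h1δ : (0:ℝ) < 1 - δ := by linarith
  have hN1 : 2*(n:ℝ)+2 ≤ (N':ℝ) := by
    have h : 2*n+2 ≤ N' := le_trans (le_max_left _ _) hN'
    calc 2*(n:ℝ)+2 = ((2*n+2 : ℕ) : ℝ) := by push_cast; ring
      _ ≤ (N' : ℝ) := Nat.cast_le.mpr h
  have hN2 : 2*((n:ℝ)+1) ≤ (1-δ)*(N':ℝ) := by
    have hceil : ⌈(2*((n:ℝ)+1))/(1-δ)⌉₊ ≤ N' := le_trans (le_max_right _ _) hN'
    have hle : (2*((n:ℝ)+1))/(1-δ) ≤ (N' : ℝ) := by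
      calc (2*((n:ℝ)+1))/(1-δ) ≤ (⌈(2*((n:ℝ)+1))/(1-δ)⌉₊ : ℝ) := Nat.le_ceil _
        _ ≤ (N' : ℝ) := Nat.cast_le.mpr hceil
    calc 2*((n:ℝ)+1) = (2*((n:ℝ)+1))/(1-δ) * (1-δ) := by field_simp
      _ ≤ (N':ℝ) * (1-δ) := mul_le_mul_of_nonneg_right hle (le_of_lt h1δ)
      _ = (1-δ)*(N':ℝ) := mul_comm _ _
  refine ⟨(3:ℝ) ^ ((n:ℝ)*δ/2) * (2:ℝ) ^ (2*(N':ℝ)) *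
    (2 * ∫ u : Rn n, (1+‖u‖) ^ (-((n:ℝ)+1))), ?_, ?_⟩
  · intro ξ₁; exact schur_integral_bound n δ hδ0 hδ1 N' hN1 hN2 ξ₁
  · intro ξ₂
    have hsymm : (∫ ξ₁ : Rn n, schurKernel n δ N' ξ₁ ξ₂)
        = ∫ ξ₁ : Rn n, schurKernel n δ N' ξ₂ ξ₁ := by
      congr 1; funext ξ₁; exact schurKernel_symm n δ N' ξ₁ ξ₂
    rw [hsymm]
    exact schur_integral_bound n δ hδ0 hδ1 N' hN1 hN2 ξ₂

end OIOPaper
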